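/- arXiv:2102.03867 — 3 statements merged into one kernel-verified Lean document; each statement's English description precedes it below -/
import Mathlib

section
/- Let P_{n,k}(x) = Σ x^{pmp_{\underline{1}23}(σ)} where the sum is over σ ∈ S_n whose last ascent is at position k (i.e., σ_k < σ_{k+1} > σ_{k+2} > ... > σ_n). Then for 1 ≤ k ≤ n-1, P_{n,k}(x) = (k-1)x·P_{n-1,k-1}(x) + 1 + Σ_{ℓ=1}^{k} P_{n-1,ℓ}(x), with the conventions P_{n,0}(x) = P_{n,n}(x) = 0. -/
/-- Number of positions that start an occurrence of 123 in `σ` (pmp of `\underline{1}23`). -/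
noncomputable def pmpS123 {n : ℕ} (σ : Equiv.Perm (Fin n)) : ℕ :=
  Nat.card {i : Fin n // ∃ j k : Fin n, i < j ∧ j < k ∧ σ i < σ j ∧ σ j < σ k}

/-- The last ascent of `σ` is at position `k` (1-indexed):
`σ_k < σ_{k+1} > σ_{k+2} > ... > σ_n`. -/
def LastAscentAt {n : ℕ} (σ : Equiv.Perm (Fin n)) (k : ℕ) : Prop :=
  ∃ (h1 : 0 < k) (h2 : k < n),
    σ ⟨k - 1, by omega⟩ < σ ⟨k, h2⟩ ∧
    ∀ j : ℕ, k ≤ j → ∀ hj : j + 1 < n, σ ⟨j + 1, hj⟩ < σ ⟨j, by omega⟩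

open Classical in
/-- `P n k = Σ x^{pmp_{\underline{1}23}(σ)}` over `σ ∈ S_n` with last ascent at position `k`. -/
noncomputable def P (n k : ℕ) : Polynomial ℕ :=
  ∑ σ : Equiv.Perm (Fin n), if LastAscentAt σ k then Polynomial.X ^ pmpS123 σ else 0

namespace Stmt9Aux
open Polynomial Finset

/-- `x` starts an occurrence of 123. -/
def Starts {n : ℕ} (σ : Equiv.Perm (Fin n)) (x : Fin n) : Prop :=
  ∃ j k : Fin n, x < j ∧ j < k ∧ σ x < σ j ∧ σ j < σ k

open Classical in
lemma pmp_eq_sum {n : ℕ} (σ : Equiv.Perm (Fin n)) :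
    pmpS123 σ = ∑ x : Fin n, if Starts σ x then 1 else 0 := by
  classical
  rw [pmpS123, Nat.card_eq_fintype_card, Fintype.card_subtype, Finset.card_filter]
  exact Finset.sum_congr rfl fun x _ => if_congr Iff.rfl rfl rfl

/-- `Dec σ r` : σ is strictly decreasing from index `r` on. -/
def Dec {n : ℕ} (σ : Equiv.Perm (Fin n)) (r : ℕ) : Prop :=
  ∀ j : ℕ, r ≤ j → ∀ hj : j + 1 < n, σ ⟨j + 1, hj⟩ < σ ⟨j, by omega⟩

lemma lastAscentAt_def {n : ℕ} (σ : Equiv.Perm (Fin n)) (k : ℕ) :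
    LastAscentAt σ k ↔ ∃ (h1 : 0 < k) (h2 : k < n),
      σ ⟨k - 1, by omega⟩ < σ ⟨k, h2⟩ ∧ Dec σ k := Iff.rfl

lemma dec_mono {n : ℕ} {σ : Equiv.Perm (Fin n)} {r r' : ℕ} (h : r ≤ r') (hd : Dec σ r) :
    Dec σ r' := fun j hj => hd j (le_trans h hj)

lemma dec_chain {n : ℕ} {σ : Equiv.Perm (Fin n)} {r : ℕ} (h : Dec σ r) :
    ∀ b a : ℕ, (hb : b < n) → (hra : r ≤ a) → (hab : a < b) → σ ⟨b, hb⟩ < σ ⟨a, by omega⟩ := by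
  intro b
  induction b with
  | zero => omega
  | succ b ih =>
    intro a hb hra hab
    rcases eq_or_lt_of_le (Nat.le_of_lt_succ hab) with h'|h'
    · subst h'; exact h a hra hb
    · exact lt_trans (h b (by omega) hb) (ih a (by omega) hra h')

lemma lastasc_le {n : ℕ} {σ : Equiv.Perm (Fin n)} {ℓ r : ℕ}
    (h : LastAscentAt σ ℓ) (hd : Dec σ r) : ℓ ≤ r := by
  obtain ⟨h1, h2, hasc, -⟩ := h
  by_contra hc
  exact absurd hasc (not_lt_of_gt (dec_chain hd ℓ (ℓ-1) h2 (by omega) (by omega)))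

lemma lastasc_unique {n : ℕ} {σ : Equiv.Perm (Fin n)} {ℓ ℓ' : ℕ}
    (h : LastAscentAt σ ℓ) (h' : LastAscentAt σ ℓ') : ℓ = ℓ' := by
  obtain ⟨-, -, -, hd⟩ := id h'
  have hle1 := lastasc_le h hd
  obtain ⟨-, -, -, hd'⟩ := id h
  have hle2 := lastasc_le h' hd'
  omega

open Classical in
lemma lastasc_exists {m : ℕ} (τ : Equiv.Perm (Fin m)) (hnd : ¬ Dec τ 0) :
    ∃ ℓ, LastAscentAt τ ℓ := by
  classical
  simp only [Dec, not_forall] at hnd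
  obtain ⟨j₀, -, hj₀, hlt⟩ := hnd
  set p : ℕ → Prop := fun j => ∃ hj : j + 1 < m, τ ⟨j, by omega⟩ < τ ⟨j + 1, hj⟩ with hp
  have hne : ((Finset.range m).filter p).Nonempty := by
    refine ⟨j₀, Finset.mem_filter.mpr ⟨Finset.mem_range.mpr (by omega), ⟨hj₀, ?_⟩⟩⟩
    rcases lt_or_ge (τ ⟨j₀, by omega⟩) (τ ⟨j₀+1, hj₀⟩) with h|h
    · exact h
    · exact absurd (lt_of_le_of_ne h (fun he => by
        have := τ.injective he
        simp only [Fin.mk.injEq] at this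
        omega)) hlt
  set a := ((Finset.range m).filter p).max' hne with ha
  have hamem := ((Finset.range m).filter p).max'_mem hne
  rw [Finset.mem_filter] at hamem
  obtain ⟨ham, haj, hasc⟩ := hamem
  refine ⟨a + 1, Nat.succ_pos a, haj, ?_, ?_⟩
  · simpa using hasc
  · intro j hj hjm
    have hnotmem : ¬ p j := by
      intro hpj
      have : j ≤ a := Finset.le_max' _ j (Finset.mem_filter.mpr ⟨Finset.mem_range.mpr (by omega), hpj⟩)
      omega
    have hle : ¬ τ ⟨j, by omega⟩ < τ ⟨j + 1, hjm⟩ := fun hl => hnotmem ⟨hjm, hl⟩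
    refine lt_of_le_of_ne (not_lt.mp hle) fun he => ?_
    have := τ.injective he
    simp only [Fin.mk.injEq] at this
    omega


/-- Insert the value `0` at position `i`: all other values are the values of `τ`, shifted up. -/
def E {m : ℕ} (i : Fin (m+1)) (τ : Equiv.Perm (Fin m)) : Equiv.Perm (Fin (m+1)) :=
  (finSuccEquiv' i).trans ((τ.optionCongr).trans (finSuccEquiv' 0).symm)

lemma E_self {m : ℕ} (i : Fin (m+1)) (τ : Equiv.Perm (Fin m)) : E i τ i = 0 := by
  simp [E, finSuccEquiv'_at, finSuccEquiv'_symm_none]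

lemma E_succAbove {m : ℕ} (i : Fin (m+1)) (τ : Equiv.Perm (Fin m)) (y : Fin m) :
    E i τ (i.succAbove y) = (τ y).succ := by
  simp [E, finSuccEquiv'_succAbove, finSuccEquiv'_symm_some, Fin.zero_succAbove]

lemma E_ne_zero {m : ℕ} (i : Fin (m+1)) (τ : Equiv.Perm (Fin m)) {x : Fin (m+1)}
    (h : x ≠ i) : E i τ x ≠ 0 := by
  obtain ⟨y, rfl⟩ := Fin.exists_succAbove_eq h
  rw [E_succAbove]
  exact Fin.succ_ne_zero _

lemma E_apply_low {m : ℕ} (i : Fin (m+1)) (τ : Equiv.Perm (Fin m)) (j : ℕ)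
    (hj : j < i.val) (hjm : j < m + 1) :
    E i τ ⟨j, hjm⟩ = (τ ⟨j, by omega⟩).succ := by
  have hjm' : j < m := by omega
  have : (⟨j, hjm⟩ : Fin (m+1)) = i.succAbove ⟨j, hjm'⟩ := by
    rw [Fin.succAbove_of_castSucc_lt]
    · rfl
    · simpa [Fin.lt_def] using hj
  rw [this, E_succAbove]

lemma E_apply_high {m : ℕ} (i : Fin (m+1)) (τ : Equiv.Perm (Fin m)) (j : ℕ)
    (hj : i.val ≤ j) (hjm : j < m) :
    E i τ ⟨j + 1, by omega⟩ = (τ ⟨j, hjm⟩).succ := by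
  have : (⟨j + 1, by omega⟩ : Fin (m+1)) = i.succAbove ⟨j, hjm⟩ := by
    rw [Fin.succAbove_of_le_castSucc]
    · rfl
    · simpa [Fin.le_def] using hj
  rw [this, E_succAbove]

/-- the deletion (inverse of `E`). -/
noncomputable def del {m : ℕ} (σ : Equiv.Perm (Fin (m+1))) : Equiv.Perm (Fin m) :=
  Equiv.ofBijective
    (fun y => (σ ((σ.symm 0).succAbove y)).pred (by
      intro h0
      have : (σ.symm 0).succAbove y = σ.symm 0 := by
        have := congrArg σ.symm h0
        simpa using this
      exact Fin.succAbove_ne _ y this))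
    (Finite.injective_iff_bijective.mp (by
      intro y₁ y₂ h
      have h2 := congrArg Fin.succ h
      rw [Fin.succ_pred, Fin.succ_pred] at h2
      exact Fin.succAbove_right_injective (σ.injective h2)))

lemma E_del {m : ℕ} (σ : Equiv.Perm (Fin (m+1))) : E (σ.symm 0) (del σ) = σ := by
  apply Equiv.ext
  intro x
  rcases eq_or_ne x (σ.symm 0) with rfl | hx
  · rw [E_self, Equiv.apply_symm_apply]
  · obtain ⟨y, rfl⟩ := Fin.exists_succAbove_eq hx
    rw [E_succAbove]
    simp only [del, Equiv.ofBijective_apply]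
    exact Fin.succ_pred _ _

lemma sum_E {m : ℕ} {M : Type*} [AddCommMonoid M] (f : Equiv.Perm (Fin (m+1)) → M) :
    ∑ σ : Equiv.Perm (Fin (m+1)), f σ
      = ∑ i : Fin (m+1), ∑ τ : Equiv.Perm (Fin m), f (E i τ) := by
  have hstep : ∑ σ : Equiv.Perm (Fin (m+1)), f σ
      = ∑ p : Fin (m+1) × Equiv.Perm (Fin m), f (E p.1 p.2) := by
    have hbij : Function.Bijective
        (fun p : Fin (m+1) × Equiv.Perm (Fin m) => E p.1 p.2) := by
      constructor
      · rintro ⟨i, τ⟩ ⟨i', τ'⟩ h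
        simp only at h
        have hi : i = i' := by
          by_contra hne
          have := E_ne_zero i' τ' (x := i) hne
          rw [← h, E_self] at this
          exact this rfl
        subst hi
        suffices hτ : τ = τ' by rw [hτ]
        apply Equiv.ext
        intro y
        have := congrFun (congrArg (fun (e : Equiv.Perm (Fin (m+1))) => e.toFun) h) (i.succAbove y)
        simp only [Equiv.toFun_as_coe] at this
        rw [E_succAbove, E_succAbove] at this
        exact Fin.succ_injective _ this
      · intro σ
        exact ⟨⟨σ.symm 0, del σ⟩, E_del σ⟩
    exact (Fintype.sum_bijective _ hbij _ f (fun _ => rfl)).symm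
  rw [Fintype.sum_prod_type] at hstep
  exact hstep

/-- Occurrence-starting positions other than `i` correspond. -/
lemma starts_E_succAbove {m : ℕ} (i : Fin (m+1)) (τ : Equiv.Perm (Fin m)) (y : Fin m) :
    Starts (E i τ) (i.succAbove y) ↔ Starts τ y := by
  constructor
  · rintro ⟨j, k, h1, h2, h3, h4⟩
    have hk : k ≠ i := by
      intro h; subst h
      rw [E_self] at h4
      exact absurd h4 (Fin.not_lt_zero _)
    have hj : j ≠ i := by
      intro h; subst h
      rw [E_self] at h3
      exact absurd h3 (Fin.not_lt_zero _)
    obtain ⟨b, rfl⟩ := Fin.exists_succAbove_eq hj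
    obtain ⟨c, rfl⟩ := Fin.exists_succAbove_eq hk
    simp only [E_succAbove] at h3 h4
    exact ⟨b, c, Fin.succAbove_lt_succAbove_iff.mp h1, Fin.succAbove_lt_succAbove_iff.mp h2,
      Fin.succ_lt_succ_iff.mp h3, Fin.succ_lt_succ_iff.mp h4⟩
  · rintro ⟨b, c, h1, h2, h3, h4⟩
    refine ⟨i.succAbove b, i.succAbove c, Fin.succAbove_lt_succAbove_iff.mpr h1,
      Fin.succAbove_lt_succAbove_iff.mpr h2, ?_, ?_⟩
    · rw [E_succAbove, E_succAbove]; exact Fin.succ_lt_succ_iff.mpr h3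
    · rw [E_succAbove, E_succAbove]; exact Fin.succ_lt_succ_iff.mpr h4

open Classical in
lemma pmp_E {m : ℕ} (i : Fin (m+1)) (τ : Equiv.Perm (Fin m)) :
    pmpS123 (E i τ) = pmpS123 τ + (if Starts (E i τ) i then 1 else 0) := by
  rw [pmp_eq_sum, pmp_eq_sum,
    Fin.sum_univ_succAbove (fun x => if Starts (E i τ) x then 1 else 0) i, add_comm]
  congr 1
  exact Finset.sum_congr rfl fun y _ => if_congr (starts_E_succAbove i τ y) rfl rfl


lemma perm_lt_congr {n : ℕ} (τ : Equiv.Perm (Fin n)) {a b a' b' : ℕ} {ha : a < n} {hb : b < n}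
    {ha' : a' < n} {hb' : b' < n} (hA : a' = a) (hB : b' = b)
    (h : τ ⟨a, ha⟩ < τ ⟨b, hb⟩) : τ ⟨a', ha'⟩ < τ ⟨b', hb'⟩ := by
  subst hA; subst hB; exact h

lemma E_apply_high' {m : ℕ} (i : Fin (m+1)) (τ : Equiv.Perm (Fin m)) (j' j : ℕ)
    (hj : i.val ≤ j) (hjm : j < m) (h : j' = j + 1) (hj' : j' < m + 1) :
    E i τ ⟨j', hj'⟩ = (τ ⟨j, hjm⟩).succ := by
  subst h; exact E_apply_high i τ j hj hjm


lemma E_lt_iff_high {m : ℕ} (i : Fin (m+1)) (τ : Equiv.Perm (Fin m)) (a b : ℕ)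
    {a' b' : ℕ} (hA : a' = a + 1) (hB : b' = b + 1) (ha : a < m) (hb : b < m)
    (hia : i.val ≤ a) (hib : i.val ≤ b) {ha' : a' < m + 1} {hb' : b' < m + 1} :
    (E i τ ⟨a', ha'⟩ < E i τ ⟨b', hb'⟩) ↔ τ ⟨a, ha⟩ < τ ⟨b, hb⟩ := by
  subst hA; subst hB
  rw [E_apply_high i τ a hia ha, E_apply_high i τ b hib hb]
  exact Fin.succ_lt_succ_iff

lemma E_lt_iff_low {m : ℕ} (i : Fin (m+1)) (τ : Equiv.Perm (Fin m)) (a b : ℕ)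
    (ha : a < i.val) (hb : b < i.val) {ha' : a < m + 1} {hb' : b < m + 1}
    (ham : a < m) (hbm : b < m) :
    (E i τ ⟨a, ha'⟩ < E i τ ⟨b, hb'⟩) ↔ τ ⟨a, ham⟩ < τ ⟨b, hbm⟩ := by
  rw [E_apply_low i τ a ha ha', E_apply_low i τ b hb hb']
  exact Fin.succ_lt_succ_iff

lemma E_pos {m : ℕ} (i : Fin (m+1)) (τ : Equiv.Perm (Fin m)) {a : ℕ} {ha : a < m + 1}
    (hne : a ≠ i.val) {b : ℕ} {hb : b < m + 1} (hbi : b = i.val) :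
    E i τ ⟨b, hb⟩ < E i τ ⟨a, ha⟩ := by
  have hii : (⟨b, hb⟩ : Fin (m+1)) = i := Fin.ext (by simpa using hbi)
  rw [hii, E_self]
  refine Fin.pos_of_ne_zero (E_ne_zero i τ ?_)
  intro h
  have := congrArg Fin.val h
  simp at this
  omega

section CaseLemmas
variable {m : ℕ} (i : Fin (m+1)) (τ : Equiv.Perm (Fin m)) {k : ℕ}

/-- Region a : `i < k-1`. -/
lemma la_E_low (hk : 2 ≤ k) (hkm : k ≤ m) (hi : i.val < k - 1) :
    LastAscentAt (E i τ) k ↔ LastAscentAt τ (k-1) := by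
  constructor
  · rintro ⟨hx1, hx2, hasc, hdec⟩
    refine ⟨by omega, by omega, ?_, ?_⟩
    · exact perm_lt_congr τ (by omega) (by omega)
        ((E_lt_iff_high i τ (k-2) (k-1) (by omega) (by omega) (by omega) (by omega)
          (by omega) (by omega)).mp hasc)
    · intro j hj hjm
      exact (E_lt_iff_high i τ (j+1) j rfl rfl hjm (by omega) (by omega) (by omega)).mp
        (hdec (j+1) (by omega) (by omega))
  · rintro ⟨hx1, hx2, hasc, hdec⟩
    refine ⟨by omega, by omega, ?_, ?_⟩
    · exact (E_lt_iff_high i τ (k-2) (k-1) (by omega) (by omega) (by omega) (by omega)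
        (by omega) (by omega)).mpr (perm_lt_congr τ (by omega) (by omega) hasc)
    · intro j hj hjm
      exact (E_lt_iff_high i τ j (j-1) rfl (by omega) (by omega) (by omega) (by omega)
        (by omega)).mpr (perm_lt_congr τ (by omega) (by omega) (hdec (j-1) (by omega) (by omega)))

/-- Region b : `i = k-1`. -/
lemma la_E_mid (hk : 1 ≤ k) (hkm : k ≤ m) (hi : i.val = k - 1) :
    LastAscentAt (E i τ) k ↔ Dec τ (k-1) := by
  constructor
  · rintro ⟨hx1, hx2, hasc, hdec⟩
    intro j hj hjm
    exact (E_lt_iff_high i τ (j+1) j rfl rfl hjm (by omega) (by omega) (by omega)).mp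
      (hdec (j+1) (by omega) (by omega))
  · intro hdec
    refine ⟨by omega, by omega, ?_, ?_⟩
    · exact E_pos i τ (by omega) (by omega)
    · intro j hj hjm
      exact (E_lt_iff_high i τ j (j-1) rfl (by omega) (by omega) (by omega) (by omega)
        (by omega)).mpr (perm_lt_congr τ (by omega) (by omega) (hdec (j-1) (by omega) (by omega)))

/-- Region c : `k ≤ i < m`. -/
lemma la_E_high (hi : k ≤ i.val) (him : i.val < m) : ¬ LastAscentAt (E i τ) k := by
  rintro ⟨hx1, hx2, hasc, hdec⟩
  have h := hdec i.val hi (by omega)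
  have h2 := E_pos i τ (a := i.val + 1) (ha := by omega) (by omega) (b := i.val)
    (hb := by omega) rfl
  exact absurd h (not_lt_of_gt h2)

/-- Region d : `i = m` (last position). -/
lemma la_E_last (hk : 1 ≤ k) (hkm : k ≤ m) (hi : i.val = m) :
    LastAscentAt (E i τ) k ↔ LastAscentAt τ k := by
  by_cases hkm2 : k = m
  · constructor
    · rintro ⟨hx1, hx2, hasc, hdec⟩
      exfalso
      exact absurd hasc (not_lt_of_gt (E_pos i τ (by omega) (by omega)))
    · rintro ⟨hx1, hx2, hasc, hdec⟩
      omega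
  · have hk2 : k < m := by omega
    constructor
    · rintro ⟨hx1, hx2, hasc, hdec⟩
      refine ⟨by omega, hk2, ?_, ?_⟩
      · exact (E_lt_iff_low i τ (k-1) k (by omega) (by omega) (by omega) (by omega)).mp hasc
      · intro j hj hjm
        exact (E_lt_iff_low i τ (j+1) j (by omega) (by omega) (by omega) (by omega)).mp
          (hdec j hj (by omega))
    · rintro ⟨hx1, hx2, hasc, hdec⟩
      refine ⟨by omega, by omega, ?_, ?_⟩
      · exact (E_lt_iff_low i τ (k-1) k (by omega) (by omega) (by omega) (by omega)).mpr hasc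
      · intro j hj hjm
        by_cases hjm2 : j + 1 < m
        · exact (E_lt_iff_low i τ (j+1) j (by omega) (by omega) (by omega) (by omega)).mpr
            (hdec j hj hjm2)
        · exact E_pos i τ (by omega) (by omega)

lemma starts_E_low (hk : 2 ≤ k) (hkm : k ≤ m) (hi : i.val < k - 1)
    (hla : LastAscentAt (E i τ) k) : Starts (E i τ) i := by
  obtain ⟨hx1, hx2, hasc, hdec⟩ := hla
  refine ⟨⟨k-1, by omega⟩, ⟨k, by omega⟩, ?_, ?_, ?_, hasc⟩
  · rw [Fin.lt_def]
    simpa using hi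
  · rw [Fin.lt_def]
    simp
    omega
  · exact E_pos i τ (by omega) (by omega)

lemma starts_E_mid (hk : 1 ≤ k) (hi : i.val = k - 1)
    (hla : LastAscentAt (E i τ) k) : ¬ Starts (E i τ) i := by
  obtain ⟨hx1, hx2, hasc, hdec⟩ := hla
  rintro ⟨j, l, h1, hjl, hv1, h4⟩
  have hj : k ≤ j.val := by
    have := Fin.lt_def.mp h1
    omega
  have hc := dec_chain hdec l.val j.val l.isLt hj (Fin.lt_def.mp hjl)
  rw [Fin.eta, Fin.eta] at hc
  exact absurd h4 (not_lt_of_gt hc)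

lemma starts_E_last (hi : i.val = m) : ¬ Starts (E i τ) i := by
  rintro ⟨j, l, h1, h2, hv1, hv2⟩
  have hj := j.isLt
  have hl := l.isLt
  have h1' := Fin.lt_def.mp h1
  have h2' := Fin.lt_def.mp h2
  omega

end CaseLemmas

open Classical in
lemma P_zero (n : ℕ) : P n 0 = 0 := by
  rw [P]
  apply Finset.sum_eq_zero
  intro σ _
  rw [if_neg]
  rintro ⟨h1, h2⟩
  exact absurd h1 (lt_irrefl 0)

open Classical in
lemma P_self (n : ℕ) : P n n = 0 := by
  rw [P]
  apply Finset.sum_eq_zero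
  intro σ _
  rw [if_neg]
  rintro ⟨h1, h2, h3⟩
  exact absurd h2 (lt_irrefl n)

open Polynomial in
lemma dec_zero_unique {m : ℕ} (τ : Equiv.Perm (Fin m)) (h : Dec τ 0) : τ = Fin.revPerm := by
  have hanti : ∀ a b : Fin m, a < b → τ b < τ a := by
    intro a b hab
    have := dec_chain h b.val a.val b.isLt (Nat.zero_le _) (Fin.lt_def.mp hab)
    rwa [Fin.eta, Fin.eta] at this
  set f : Fin m → Fin m := fun y => (τ y).rev with hf
  have hmono : StrictMono f := by
    intro a b hab
    exact Fin.rev_lt_rev.mpr (hanti a b hab)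
  have hbij : Function.Bijective f := by
    refine ⟨fun a b hab => ?_, fun v => ⟨τ.symm v.rev, by simp [hf]⟩⟩
    have := Fin.rev_injective hab
    exact τ.injective this
  have hle : ∀ v : ℕ, (hv : v < m) → v ≤ (f ⟨v, hv⟩).val := by
    intro v
    induction v with
    | zero => intro hv; exact Nat.zero_le _
    | succ v ih =>
      intro hv
      have h1 : f ⟨v, by omega⟩ < f ⟨v+1, hv⟩ := hmono (by simp [Fin.lt_def])
      have := ih (by omega)
      have := Fin.lt_def.mp h1
      omega
  have hsum : ∑ y : Fin m, (f y).val = ∑ y : Fin m, y.val :=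
    Fintype.sum_bijective f hbij _ _ (fun _ => rfl)
  have hpt : ∀ y : Fin m, y.val = (f y).val := by
    have := (Finset.sum_eq_sum_iff_of_le
      (f := fun y : Fin m => y.val) (g := fun y : Fin m => (f y).val)
      (fun y _ => by simpa using hle y.val y.isLt)).mp (by rw [hsum])
    intro y
    exact this y (Finset.mem_univ y)
  apply Equiv.ext
  intro y
  have : (τ y).rev = y := Fin.ext (hpt y).symm
  have h2 : τ y = y.rev := by
    have := congrArg Fin.rev this
    rwa [Fin.rev_rev] at this
  rw [h2, Fin.revPerm_apply]

lemma dec_zero_rev {m : ℕ} : Dec (Fin.revPerm : Equiv.Perm (Fin m)) 0 := by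
  intro j hj hjm
  rw [Fin.revPerm_apply, Fin.revPerm_apply]
  exact Fin.rev_lt_rev.mpr (by simp [Fin.lt_def])

lemma pmp_dec_zero {m : ℕ} {τ : Equiv.Perm (Fin m)} (h : Dec τ 0) : pmpS123 τ = 0 := by
  rw [pmp_eq_sum]
  apply Finset.sum_eq_zero
  intro x _
  rw [if_neg]
  rintro ⟨j, l, h1, h2, h3, h4⟩
  have hc := dec_chain h j.val x.val j.isLt (Nat.zero_le _) (Fin.lt_def.mp h1)
  rw [Fin.eta, Fin.eta] at hc
  exact absurd h3 (not_lt_of_gt hc)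

open Classical Polynomial in
lemma sum_dec_zero (m : ℕ) :
    ∑ τ : Equiv.Perm (Fin m), (if Dec τ 0 then (X : Polynomial ℕ) ^ pmpS123 τ else 0) = 1 := by
  rw [Finset.sum_eq_single (Fin.revPerm : Equiv.Perm (Fin m))]
  · rw [if_pos dec_zero_rev, pmp_dec_zero dec_zero_rev, pow_zero]
  · intro τ _ hne
    rw [if_neg]
    intro hd
    exact hne (dec_zero_unique τ hd)
  · intro h
    exact absurd (Finset.mem_univ _) h

open Classical Polynomial in
lemma sum_icc_lastasc {m : ℕ} (τ : Equiv.Perm (Fin m)) (k : ℕ) (hk : 1 ≤ k)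
    (c : Polynomial ℕ) :
    ∑ ℓ ∈ Finset.Icc 1 (k-1), (if LastAscentAt τ ℓ then c else 0)
      = if Dec τ (k-1) ∧ ¬ Dec τ 0 then c else 0 := by
  by_cases h : Dec τ (k-1) ∧ ¬ Dec τ 0
  · obtain ⟨ℓ₀, hl₀⟩ := lastasc_exists τ h.2
    have hle : ℓ₀ ≤ k - 1 := lastasc_le hl₀ h.1
    have hge : 1 ≤ ℓ₀ := hl₀.1
    rw [if_pos h, Finset.sum_eq_single_of_mem ℓ₀ (Finset.mem_Icc.mpr ⟨hge, hle⟩)]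
    · rw [if_pos hl₀]
    · intro ℓ _ hne
      rw [if_neg]
      intro hl
      exact hne (lastasc_unique hl hl₀)
  · rw [if_neg h]
    apply Finset.sum_eq_zero
    intro ℓ hℓ
    rw [Finset.mem_Icc] at hℓ
    rw [if_neg]
    intro hl
    apply h
    obtain ⟨hp1, hp2, hasc, hdec⟩ := id hl
    constructor
    · exact dec_mono (by omega) hdec
    · intro hd0
      have hc := hd0 (ℓ - 1) (Nat.zero_le _) (by omega)
      exact absurd hasc (not_lt_of_gt (perm_lt_congr τ (by omega) (by omega) hc))

section Inner
variable {m k : ℕ}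

open Classical Polynomial in
lemma inner_low (hk2 : 2 ≤ k) (hkm : k ≤ m) (i : Fin (m+1)) (hi : i.val < k-1) :
    ∑ τ : Equiv.Perm (Fin m),
        (if LastAscentAt (E i τ) k then (X : Polynomial ℕ) ^ pmpS123 (E i τ) else 0)
      = X * P m (k-1) := by
  rw [P, Finset.mul_sum]
  apply Finset.sum_congr rfl
  intro τ _
  by_cases h : LastAscentAt (E i τ) k
  · rw [if_pos h, if_pos ((la_E_low i τ hk2 hkm hi).mp h), pmp_E,
      if_pos (starts_E_low i τ hk2 hkm hi h), pow_succ, mul_comm]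
  · rw [if_neg h, if_neg (fun hh => h ((la_E_low i τ hk2 hkm hi).mpr hh)), mul_zero]

open Classical Polynomial in
lemma inner_mid (hk : 1 ≤ k) (hkm : k ≤ m) (i : Fin (m+1)) (hi : i.val = k-1) :
    ∑ τ : Equiv.Perm (Fin m),
        (if LastAscentAt (E i τ) k then (X : Polynomial ℕ) ^ pmpS123 (E i τ) else 0)
      = 1 + ∑ ℓ ∈ Finset.Icc 1 (k-1), P m ℓ := by
  have step1 : ∀ τ : Equiv.Perm (Fin m),
      (if LastAscentAt (E i τ) k then (X : Polynomial ℕ) ^ pmpS123 (E i τ) else 0)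
        = (if Dec τ 0 then (X : Polynomial ℕ) ^ pmpS123 τ else 0)
          + ∑ ℓ ∈ Finset.Icc 1 (k-1),
              (if LastAscentAt τ ℓ then (X : Polynomial ℕ) ^ pmpS123 τ else 0) := by
    intro τ
    rw [sum_icc_lastasc τ k hk]
    by_cases h : LastAscentAt (E i τ) k
    · have hd : Dec τ (k-1) := (la_E_mid i τ hk hkm hi).mp h
      have hpmp : pmpS123 (E i τ) = pmpS123 τ := by
        rw [pmp_E, if_neg (starts_E_mid i τ hk hi h), add_zero]
      rw [if_pos h, hpmp]
      by_cases h0 : Dec τ 0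
      · rw [if_pos h0, if_neg (fun hc => hc.2 h0), add_zero]
      · rw [if_neg h0, if_pos ⟨hd, h0⟩, zero_add]
    · have hd : ¬ Dec τ (k-1) := fun hd => h ((la_E_mid i τ hk hkm hi).mpr hd)
      rw [if_neg h, if_neg (fun h0 : Dec τ 0 => hd (dec_mono (Nat.zero_le _) h0)),
        if_neg (fun hc => hd hc.1), add_zero]
  rw [Finset.sum_congr rfl (fun τ _ => step1 τ), Finset.sum_add_distrib, sum_dec_zero m]
  congr 1
  rw [Finset.sum_comm]
  apply Finset.sum_congr rfl
  intro ℓ _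
  rw [P]

open Classical Polynomial in
lemma inner_high (i : Fin (m+1)) (hi : k ≤ i.val) (him : i.val < m) :
    ∑ τ : Equiv.Perm (Fin m),
        (if LastAscentAt (E i τ) k then (X : Polynomial ℕ) ^ pmpS123 (E i τ) else 0)
      = 0 := by
  apply Finset.sum_eq_zero
  intro τ _
  rw [if_neg (la_E_high i τ hi him)]

open Classical Polynomial in
lemma inner_last (hk : 1 ≤ k) (hkm : k ≤ m) (i : Fin (m+1)) (hi : i.val = m) :
    ∑ τ : Equiv.Perm (Fin m),
        (if LastAscentAt (E i τ) k then (X : Polynomial ℕ) ^ pmpS123 (E i τ) else 0)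
      = P m k := by
  rw [P]
  apply Finset.sum_congr rfl
  intro τ _
  by_cases h : LastAscentAt (E i τ) k
  · rw [if_pos h, if_pos ((la_E_last i τ hk hkm hi).mp h), pmp_E,
      if_neg (starts_E_last i τ hi), add_zero]
  · rw [if_neg h, if_neg (fun hh => h ((la_E_last i τ hk hkm hi).mpr hh))]

end Inner

open Classical Polynomial in
lemma main_rec (m k : ℕ) (hk : 1 ≤ k) (hkm : k ≤ m) :
    P (m+1) k = (k - 1) • ((X : Polynomial ℕ) * P m (k-1)) + 1
      + ∑ ℓ ∈ Finset.Icc 1 k, P m ℓ := by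
  have h0 : P (m+1) k = ∑ i : Fin (m+1), ∑ τ : Equiv.Perm (Fin m),
      (if LastAscentAt (E i τ) k then (X : Polynomial ℕ) ^ pmpS123 (E i τ) else 0) := by
    rw [P]
    exact sum_E _
  set F : ℕ → Polynomial ℕ := fun j =>
    if j < k-1 then X * P m (k-1)
    else if j = k-1 then 1 + ∑ ℓ ∈ Finset.Icc 1 (k-1), P m ℓ
    else if j = m then P m k else 0 with hF
  have hFi : ∀ i : Fin (m+1), (∑ τ : Equiv.Perm (Fin m),
      (if LastAscentAt (E i τ) k then (X : Polynomial ℕ) ^ pmpS123 (E i τ) else 0))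
        = F i.val := by
    intro i
    by_cases c1 : i.val < k-1
    · rw [inner_low (by omega) hkm i c1]
      simp only [hF]
      rw [if_pos c1]
    · by_cases c2 : i.val = k-1
      · rw [inner_mid hk hkm i c2]
        simp only [hF]
        rw [if_neg c1, if_pos c2]
      · by_cases c3 : i.val = m
        · rw [inner_last hk hkm i c3]
          simp only [hF]
          rw [if_neg c1, if_neg c2, if_pos c3]
        · rw [inner_high i (by omega) (by have := i.isLt; omega)]
          simp only [hF]
          rw [if_neg c1, if_neg c2, if_neg c3]
  rw [h0, Finset.sum_congr rfl (fun i _ => hFi i),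
    Fin.sum_univ_eq_sum_range F (m+1), Finset.sum_range_succ]
  have hFm : F m = P m k := by
    simp only [hF]
    rw [if_neg (by omega), if_neg (by omega)]
    simp
  have hsplit : ∑ j ∈ Finset.range m, F j
      = (∑ j ∈ Finset.range k, F j) + ∑ j ∈ Finset.Ico k m, F j :=
    (Finset.sum_range_add_sum_Ico F hkm).symm
  have hIco : ∑ j ∈ Finset.Ico k m, F j = 0 := by
    apply Finset.sum_eq_zero
    intro j hj
    rw [Finset.mem_Ico] at hj
    simp only [hF]
    rw [if_neg (by omega), if_neg (by omega), if_neg (by omega)]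
  have hrangek : ∑ j ∈ Finset.range k, F j
      = (k-1) • ((X : Polynomial ℕ) * P m (k-1)) + (1 + ∑ ℓ ∈ Finset.Icc 1 (k-1), P m ℓ) := by
    have hks : k = (k-1) + 1 := by omega
    rw [hks, Finset.sum_range_succ]
    congr 1
    · calc ∑ j ∈ Finset.range (k-1), F j
          = ∑ _j ∈ Finset.range (k-1), ((X : Polynomial ℕ) * P m (k-1)) := by
            apply Finset.sum_congr rfl
            intro j hj
            rw [Finset.mem_range] at hj
            simp only [hF]
            rw [if_pos (by omega)]
        _ = (k-1) • ((X : Polynomial ℕ) * P m (k-1)) := by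
            rw [Finset.sum_const, Finset.card_range]
    · simp only [hF]
      rw [if_neg (lt_irrefl _)]
      simp
  have hIcc : ∑ ℓ ∈ Finset.Icc 1 k, P m ℓ = (∑ ℓ ∈ Finset.Icc 1 (k-1), P m ℓ) + P m k := by
    have hk' : k - 1 + 1 = k := by omega
    rw [← hk', Finset.sum_Icc_succ_top (by omega), hk']
  rw [hsplit, hIco, hrangek, add_zero, hFm, hIcc]
  abel

end Stmt9Aux

theorem stmt9 (n k : ℕ) (h1 : 1 ≤ k) (h2 : k ≤ n - 1) :
    (∀ m, P m 0 = 0) ∧ (∀ m, P m m = 0) ∧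
    P n k = (k - 1) • (Polynomial.X * P (n - 1) (k - 1)) + 1 +
      ∑ ℓ ∈ Finset.Icc 1 k, P (n - 1) ℓ := by
  refine ⟨Stmt9Aux.P_zero, Stmt9Aux.P_self, ?_⟩
  obtain ⟨m, rfl⟩ : ∃ m, n = m + 1 := ⟨n - 1, by omega⟩
  have hm : m + 1 - 1 = m := by omega
  rw [hm]
  exact Stmt9Aux.main_rec m k h1 (by omega)
end

section
/- Let Q_{n,k}(x) = Σ x^{pmp_{1\underline{2}3}(σ)} where the sum is over σ ∈ S_n with σ_k = 1. Then Q_{n,k}(x) = Σ_{ℓ=1}^{k-1} Q_{n-1,ℓ}(x) + (x(n-k-1) + 1)·Q_{n-1,k}(x), with Q_{n,N}(x) = 0 for N > n. -/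
/-- Number of positions `j` serving as the middle element of an occurrence of 123
(pmp of `1\underline{2}3`). -/
noncomputable def pmpM123 {n : ℕ} (σ : Equiv.Perm (Fin n)) : ℕ :=
  Nat.card {j : Fin n // ∃ i k : Fin n, i < j ∧ j < k ∧ σ i < σ j ∧ σ j < σ k}

/-- The value 1 of `σ` is at (1-indexed) position `k`. -/
def OneAt {n : ℕ} (σ : Equiv.Perm (Fin n)) (k : ℕ) : Prop :=
  ∃ (h1 : 0 < k) (h2 : k - 1 < n), σ ⟨k - 1, h2⟩ = ⟨0, by omega⟩

open Classical in
/-- `Q n k = Σ x^{pmp_{1\underline{2}3}(σ)}` over `σ ∈ S_n` with 1 at position `k`. -/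
noncomputable def Q (n k : ℕ) : Polynomial ℕ :=
  ∑ σ : Equiv.Perm (Fin n), if OneAt σ k then Polynomial.X ^ pmpM123 σ else 0

namespace Stmt11Aux

open Equiv Finset

variable {m : ℕ}

/-- insertion: the permutation of `Fin (m+1)` sending `a` to `b` and `a.succAbove j` to
`b.succAbove (τ j)`. -/
def ins (a b : Fin (m+1)) (τ : Perm (Fin m)) : Perm (Fin (m+1)) :=
  (finSuccEquiv' a).trans (τ.optionCongr.trans (finSuccEquiv' b).symm)

lemma ins_self (a b : Fin (m+1)) (τ : Perm (Fin m)) : ins a b τ a = b := by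
  simp [ins]

lemma ins_succAbove (a b : Fin (m+1)) (τ : Perm (Fin m)) (j : Fin m) :
    ins a b τ (a.succAbove j) = b.succAbove (τ j) := by
  simp [ins, finSuccEquiv'_succAbove, finSuccEquiv'_symm_some]

/-- deletion -/
def del (a b : Fin (m+1)) (σ : Perm (Fin (m+1))) : Perm (Fin m) :=
  removeNone (((finSuccEquiv' a).symm.trans σ).trans (finSuccEquiv' b))

lemma del_succAbove {a b : Fin (m+1)} {σ : Perm (Fin (m+1))} (h : σ a = b) (j : Fin m) :
    b.succAbove (del a b σ j) = σ (a.succAbove j) := by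
  have hne : σ (a.succAbove j) ≠ b := by
    rw [← h]
    exact fun he => Fin.succAbove_ne a j (σ.injective he)
  obtain ⟨y, hy⟩ := Fin.exists_succAbove_eq hne
  have key : (((finSuccEquiv' a).symm.trans σ).trans (finSuccEquiv' b)) (some j) = some y := by
    simp only [Equiv.trans_apply, finSuccEquiv'_symm_some, ← hy, finSuccEquiv'_succAbove]
  have h2 := Equiv.removeNone_some (((finSuccEquiv' a).symm.trans σ).trans (finSuccEquiv' b))
    ⟨y, key⟩
  rw [key, Option.some_inj] at h2
  rw [del, h2, hy]

lemma ins_del {a b : Fin (m+1)} {σ : Perm (Fin (m+1))} (h : σ a = b) :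
    ins a b (del a b σ) = σ := by
  ext x
  rcases eq_or_ne x a with rfl | hx
  · rw [ins_self, h]
  · obtain ⟨j, rfl⟩ := Fin.exists_succAbove_eq hx
    rw [ins_succAbove, del_succAbove h]

lemma del_ins (a b : Fin (m+1)) (τ : Perm (Fin m)) : del a b (ins a b τ) = τ := by
  ext j : 1
  apply Fin.succAbove_right_injective (p := b)
  rw [del_succAbove (ins_self a b τ), ins_succAbove]

lemma succAbove_val (a : Fin (m+1)) (j : Fin m) :
    (a.succAbove j).val = if j.val < a.val then j.val else j.val + 1 := by
  rw [Fin.succAbove]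
  rcases Nat.lt_or_ge j.val a.val with h | h
  · rw [if_pos (by simpa [Fin.lt_def] using h), if_pos h]; rfl
  · rw [if_neg (by simpa [Fin.lt_def, Nat.not_lt] using h), if_neg (Nat.not_lt.mpr h)]; rfl

def IsMid {N : ℕ} (σ : Perm (Fin N)) (j : Fin N) : Prop :=
  ∃ i k : Fin N, i < j ∧ j < k ∧ σ i < σ j ∧ σ j < σ k

noncomputable instance {N : ℕ} (σ : Perm (Fin N)) : DecidablePred (IsMid σ) :=
  fun _ => Classical.propDecidable _

lemma pmp_eq {N : ℕ} (σ : Perm (Fin N)) :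
    pmpM123 σ = (Finset.univ.filter (fun j => IsMid σ j)).card := by
  rw [pmpM123, Nat.card_eq_fintype_card]
  convert Fintype.card_subtype (p := IsMid σ) using 2
  rfl

lemma le_of_lt_succAbove {a : Fin (m+1)} {j : Fin m} (h : a < a.succAbove j) : a.val ≤ j.val := by
  have hv := succAbove_val a j
  rw [Fin.lt_def, hv] at h
  split at h <;> omega

lemma not_isMid_min {N : ℕ} {σ : Perm (Fin (N+1))} {c : Fin (N+1)} (hc : σ c = 0) :
    ¬ IsMid σ c := by
  rintro ⟨i, k', _, _, hvi, _⟩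
  rw [hc] at hvi
  exact Fin.not_lt_zero _ hvi

lemma midA {σ : Perm (Fin (m+2))} {c : Fin (m+2)} (hc : σ c = 0) (hq : σ.symm 1 < c)
    (j : Fin (m+1)) : IsMid σ (c.succAbove j) ↔ IsMid (del c 0 σ) j := by
  set τ := del c 0 σ with hτ
  have key : ∀ j : Fin (m+1), σ (c.succAbove j) = (τ j).succ := fun j => by
    rw [← del_succAbove hc j, Fin.zero_succAbove]
  have hone : σ (σ.symm 1) = 1 := σ.apply_symm_apply 1
  set q := σ.symm 1 with hqdef
  have hq' : q.val < m+1 := lt_of_lt_of_le (Fin.lt_def.mp hq) (Nat.lt_succ_iff.mp c.isLt)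
  set q' : Fin (m+1) := ⟨q.val, hq'⟩ with hq'def
  have hsq : c.succAbove q' = q := by
    apply Fin.ext; rw [succAbove_val]; exact if_pos (Fin.lt_def.mp hq)
  have hτq : τ q' = 0 := by
    have h1 : (τ q').succ = 1 := by rw [← key q', hsq, hone]
    have h2 := congrArg Fin.val h1
    simp only [Fin.val_succ, Fin.val_one] at h2
    apply Fin.ext
    simp only [Fin.val_zero]
    omega
  constructor
  · rintro ⟨i, k', hix, hxk, hvi, hvk⟩
    have hkc : k' ≠ c := fun he => by
      rw [he, hc] at hvk; exact Fin.not_lt_zero _ hvk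
    obtain ⟨k'', rfl⟩ := Fin.exists_succAbove_eq hkc
    have hjk : j < k'' := Fin.succAbove_lt_succAbove_iff.mp hxk
    have hvjk : τ j < τ k'' := by
      rw [key, key] at hvk; exact Fin.succ_lt_succ_iff.mp hvk
    rcases eq_or_ne i c with hic | hic
    · have hcx : c < c.succAbove j := hic ▸ hix
      refine ⟨q', k'', ?_, hjk, ?_, hvjk⟩
      · have hcj : c.val ≤ j.val := le_of_lt_succAbove hcx
        rw [Fin.lt_def]
        show q.val < j.val
        exact lt_of_lt_of_le (Fin.lt_def.mp hq) hcj
      · rw [hτq, Fin.pos_iff_ne_zero]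
        intro h0
        have hjq : j = q' := τ.injective (h0.trans hτq.symm)
        rw [hjq, hsq] at hcx
        exact absurd (hcx.trans hq) (lt_irrefl c)
    · obtain ⟨i'', rfl⟩ := Fin.exists_succAbove_eq hic
      refine ⟨i'', k'', Fin.succAbove_lt_succAbove_iff.mp hix, hjk, ?_, hvjk⟩
      rw [key, key] at hvi
      exact Fin.succ_lt_succ_iff.mp hvi
  · rintro ⟨i, k', hij, hjk, hvi, hvk⟩
    exact ⟨c.succAbove i, c.succAbove k', Fin.succAbove_lt_succAbove_iff.mpr hij,
      Fin.succAbove_lt_succAbove_iff.mpr hjk,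
      by rw [key, key]; exact Fin.succ_lt_succ_iff.mpr hvi,
      by rw [key, key]; exact Fin.succ_lt_succ_iff.mpr hvk⟩

lemma w0 : (1:Fin (m+2)).succAbove (0:Fin (m+1)) = 0 := by
  apply Fin.ext
  rw [succAbove_val]
  simp [Fin.val_one]

lemma del_B_zero {σ : Perm (Fin (m+2))} {p c : Fin (m+2)} (hp : σ p = 1) (hc : σ c = 0)
    (hcp : c < p) (c' : Fin (m+1)) (hc' : (c' : ℕ) = (c : ℕ)) : del p 1 σ c' = 0 := by
  have hsc : p.succAbove c' = c := by
    apply Fin.ext; rw [succAbove_val, hc']; exact if_pos (Fin.lt_def.mp hcp)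
  apply Fin.succAbove_right_injective (p := (1:Fin (m+2)))
  rw [del_succAbove hp, hsc, hc, w0]

lemma one_lt_of_ne {x : Fin (m+2)} (h0 : x ≠ 0) (h1 : x ≠ 1) : (1:Fin (m+2)) < x := by
  rw [Fin.lt_def, Fin.val_one]
  have hv0 : (x:ℕ) ≠ 0 := fun h => h0 (Fin.ext (by simpa using h))
  have hv1 : (x:ℕ) ≠ 1 := fun h => h1 (Fin.ext (by simpa [Fin.val_one] using h))
  omega

lemma midB {σ : Perm (Fin (m+2))} {p c : Fin (m+2)} (hp : σ p = 1) (hc : σ c = 0)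
    (hcp : c < p) (j : Fin (m+1)) :
    IsMid σ (p.succAbove j) ↔ IsMid (del p 1 σ) j := by
  set τ := del p 1 σ with hτ
  have key : ∀ j : Fin (m+1), σ (p.succAbove j) = (1:Fin (m+2)).succAbove (τ j) :=
    fun j => (del_succAbove hp j).symm
  have wlt : ∀ a b : Fin (m+1),
      (1:Fin (m+2)).succAbove a < (1:Fin (m+2)).succAbove b ↔ a < b :=
    fun a b => Fin.succAbove_lt_succAbove_iff
  have hcv : (c:ℕ) < m+1 := lt_of_lt_of_le (Fin.lt_def.mp hcp) (Nat.lt_succ_iff.mp p.isLt)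
  set c' : Fin (m+1) := ⟨c.val, hcv⟩ with hc'def
  have hτc : τ c' = 0 := del_B_zero hp hc hcp c' rfl
  constructor
  · rintro ⟨i, k', hix, hxk, hvi, hvk⟩
    have hx0 : σ (p.succAbove j) ≠ 0 := fun h0 => by
      rw [h0] at hvi; exact Fin.not_lt_zero _ hvi
    have hx1 : σ (p.succAbove j) ≠ 1 := by
      rw [← hp]; exact fun he => Fin.succAbove_ne p j (σ.injective he)
    have hx2 : (1:Fin (m+2)) < σ (p.succAbove j) := one_lt_of_ne hx0 hx1
    have hkp : k' ≠ p := fun he => by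
      rw [he, hp] at hvk; exact absurd (hx2.trans hvk) (lt_irrefl _)
    obtain ⟨k'', rfl⟩ := Fin.exists_succAbove_eq hkp
    have hjk : j < k'' := Fin.succAbove_lt_succAbove_iff.mp hxk
    have hvjk : τ j < τ k'' := (wlt _ _).mp (by rw [← key, ← key]; exact hvk)
    rcases eq_or_ne i p with hip | hip
    · have hpx : p < p.succAbove j := hip ▸ hix
      have hpj : p.val ≤ j.val := le_of_lt_succAbove hpx
      refine ⟨c', k'', ?_, hjk, ?_, hvjk⟩
      · rw [Fin.lt_def]
        show c.val < j.val
        exact lt_of_lt_of_le (Fin.lt_def.mp hcp) hpj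
      · rw [hτc, Fin.pos_iff_ne_zero]
        intro h0
        exact hx0 (by rw [key, h0, w0])
    · obtain ⟨i'', rfl⟩ := Fin.exists_succAbove_eq hip
      exact ⟨i'', k'', Fin.succAbove_lt_succAbove_iff.mp hix, hjk,
        (wlt _ _).mp (by rw [← key, ← key]; exact hvi), hvjk⟩
  · rintro ⟨i, k', hij, hjk, hvi, hvk⟩
    exact ⟨p.succAbove i, p.succAbove k', Fin.succAbove_lt_succAbove_iff.mpr hij,
      Fin.succAbove_lt_succAbove_iff.mpr hjk,
      by rw [key, key]; exact (wlt _ _).mpr hvi,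
      by rw [key, key]; exact (wlt _ _).mpr hvk⟩

lemma midB_p {σ : Perm (Fin (m+2))} {p c : Fin (m+2)} (hp : σ p = 1) (hc : σ c = 0)
    (hcp : c < p) : IsMid σ p ↔ (p:ℕ) < m+1 := by
  constructor
  · rintro ⟨i, k', _, hxk, _, _⟩
    have h1 := Fin.lt_def.mp hxk
    have h2 := k'.isLt
    omega
  · intro hpm
    have hplast : p < Fin.last (m+1) := by rw [Fin.lt_def, Fin.val_last]; exact hpm
    have hl0 : σ (Fin.last (m+1)) ≠ 0 := by
      rw [← hc]; exact fun he => absurd (σ.injective he) (ne_of_gt (hcp.trans hplast))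
    have hl1 : σ (Fin.last (m+1)) ≠ 1 := by
      rw [← hp]; exact fun he => absurd (σ.injective he) (ne_of_gt hplast)
    refine ⟨c, Fin.last (m+1), hcp, hplast, ?_, ?_⟩
    · rw [hc, hp]; rw [Fin.lt_def, Fin.val_one]; simp
    · rw [hp]; exact one_lt_of_ne hl0 hl1

open Finset in
lemma cardA {σ : Perm (Fin (m+2))} {c : Fin (m+2)} (hc : σ c = 0) (hq : σ.symm 1 < c) :
    (univ.filter (fun x => IsMid σ x)).card
      = (univ.filter (fun x => IsMid (del c 0 σ) x)).card := by
  classical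
  symm
  refine Finset.card_bij (fun j _ => c.succAbove j) ?_ ?_ ?_
  · intro j hj
    rw [mem_filter] at hj ⊢
    exact ⟨mem_univ _, (midA hc hq j).mpr hj.2⟩
  · intro a _ b _ h
    exact Fin.succAbove_right_injective h
  · intro x hx
    simp only [mem_filter, mem_univ, true_and] at hx
    have hxc : x ≠ c := fun he => not_isMid_min hc (he ▸ hx)
    obtain ⟨j, rfl⟩ := Fin.exists_succAbove_eq hxc
    exact ⟨j, by simp only [mem_filter, mem_univ, true_and]; exact (midA hc hq j).mp hx, rfl⟩

open Finset in
lemma cardB {σ : Perm (Fin (m+2))} {p c : Fin (m+2)} (hp : σ p = 1) (hc : σ c = 0)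
    (hcp : c < p) :
    (univ.filter (fun x => IsMid σ x)).card
      = (univ.filter (fun x => IsMid (del p 1 σ) x)).card + (if (p:ℕ) < m+1 then 1 else 0) := by
  classical
  set B := univ.filter (fun x => IsMid (del p 1 σ) x) with hB
  set I := B.image p.succAbove with hIdef
  have hI : I.card = B.card := card_image_of_injective _ Fin.succAbove_right_injective
  have hIA : ∀ x, x ∈ I ↔ (IsMid σ x ∧ x ≠ p) := by
    intro x
    simp only [hIdef, mem_image, hB, mem_filter, mem_univ, true_and]
    constructor
    · rintro ⟨j, hj, rfl⟩
      exact ⟨(midB hp hc hcp j).mpr hj, Fin.succAbove_ne p j⟩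
    · rintro ⟨hmid, hxp⟩
      obtain ⟨j, rfl⟩ := Fin.exists_succAbove_eq hxp
      exact ⟨j, (midB hp hc hcp j).mp hmid, rfl⟩
  by_cases hpm : (p:ℕ) < m+1
  · have hfp : IsMid σ p := (midB_p hp hc hcp).mpr hpm
    have hA : univ.filter (fun x => IsMid σ x) = insert p I := by
      ext x
      simp only [mem_filter, mem_univ, true_and, mem_insert, hIA]
      constructor
      · intro hx
        rcases eq_or_ne x p with h | h
        · exact Or.inl h
        · exact Or.inr ⟨hx, h⟩
      · rintro (rfl | ⟨hx, _⟩)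
        · exact hfp
        · exact hx
    have hpI : p ∉ I := fun h => ((hIA p).mp h).2 rfl
    rw [hA, card_insert_of_notMem hpI, hI, if_pos hpm]
  · have hA : univ.filter (fun x => IsMid σ x) = I := by
      ext x
      simp only [mem_filter, mem_univ, true_and, hIA]
      constructor
      · intro hx
        refine ⟨hx, fun he => hpm ?_⟩
        exact (midB_p hp hc hcp).mp (he ▸ hx)
      · exact fun h => h.1
    rw [hA, hI, if_neg hpm, add_zero]

lemma del_A_one {σ : Perm (Fin (m+2))} {c : Fin (m+2)} (hc : σ c = 0) (hq : σ.symm 1 < c)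
    (q' : Fin (m+1)) (hq' : (q' : ℕ) = ((σ.symm 1 : Fin (m+2)) : ℕ)) : del c 0 σ q' = 0 := by
  have hsq : c.succAbove q' = σ.symm 1 :=
    Fin.ext (by rw [succAbove_val, hq']; exact if_pos (Fin.lt_def.mp hq))
  have h1 : (del c 0 σ q').succ = 1 := by
    rw [← Fin.zero_succAbove, del_succAbove hc, hsq, σ.apply_symm_apply]
  have h2 := congrArg Fin.val h1
  simp only [Fin.val_succ, Fin.val_one] at h2
  apply Fin.ext
  simp only [Fin.val_zero]
  omega

open Classical in
lemma oneAt_iff {N k : ℕ} (hk1 : 1 ≤ k) (hk : k - 1 < N+1) (σ : Perm (Fin (N+1))) :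
    OneAt σ k ↔ σ ⟨k-1, hk⟩ = 0 := by
  constructor
  · rintro ⟨h1, h2, he⟩
    rw [he]
    apply Fin.ext
    simp [Fin.val_zero]
  · intro h
    refine ⟨hk1, hk, ?_⟩
    rw [h]
    apply Fin.ext
    simp [Fin.val_zero]

open Classical in
lemma Q_eq {N k : ℕ} (hk1 : 1 ≤ k) (hk : k - 1 < N+1) :
    Q (N+1) k = ∑ σ : Perm (Fin (N+1)), if σ ⟨k-1, hk⟩ = 0 then Polynomial.X ^ pmpM123 σ else 0 := by
  rw [Q]
  refine Finset.sum_congr rfl fun σ _ => ?_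
  exact if_congr (oneAt_iff hk1 hk σ) rfl rfl

lemma Q_zero (M N : ℕ) (h : M < N) : Q M N = 0 := by
  rw [Q]
  refine Finset.sum_eq_zero fun σ _ => ?_
  rw [if_neg]
  rintro ⟨h1, h2, -⟩
  omega

open Classical in
lemma sum_Icc_Q {M k : ℕ} :
    (∑ ℓ ∈ Finset.Icc 1 (k-1), Q (M+1) ℓ)
      = ∑ τ : Perm (Fin (M+1)),
          if ((τ.symm 0 : Fin (M+1)) : ℕ) < k-1 then Polynomial.X ^ pmpM123 τ else 0 := by
  simp only [Q]
  rw [Finset.sum_comm]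
  refine Finset.sum_congr rfl fun τ _ => ?_
  have hone : ∀ ℓ : ℕ, OneAt τ ℓ ↔ ℓ = ((τ.symm 0 : Fin (M+1)) : ℕ) + 1 := by
    intro ℓ
    constructor
    · rintro ⟨h1, h2, he⟩
      have he' : τ ⟨ℓ-1, h2⟩ = 0 := by
        rw [he]; apply Fin.ext; simp [Fin.val_zero]
      have : (⟨ℓ-1, h2⟩ : Fin (M+1)) = τ.symm 0 := by
        rw [← he', Equiv.symm_apply_apply]
      have hv := congrArg Fin.val this
      simp only at hv
      omega
    · rintro rfl
      refine ⟨by omega, by simpa using (τ.symm 0).isLt, ?_⟩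
      have : (⟨((τ.symm 0 : Fin (M+1)) : ℕ) + 1 - 1, by simpa using (τ.symm 0).isLt⟩ : Fin (M+1))
          = τ.symm 0 := by
        apply Fin.ext; simp
      rw [this, Equiv.apply_symm_apply]
      apply Fin.ext; simp [Fin.val_zero]
  calc (∑ ℓ ∈ Finset.Icc 1 (k-1), if OneAt τ ℓ then (Polynomial.X:Polynomial ℕ) ^ pmpM123 τ else 0)
      = ∑ ℓ ∈ Finset.Icc 1 (k-1),
          if ℓ = ((τ.symm 0 : Fin (M+1)) : ℕ) + 1 then (Polynomial.X:Polynomial ℕ) ^ pmpM123 τ else 0 :=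
        Finset.sum_congr rfl fun ℓ _ => if_congr (hone ℓ) rfl rfl
    _ = if ((τ.symm 0 : Fin (M+1)) : ℕ) + 1 ∈ Finset.Icc 1 (k-1)
          then (Polynomial.X:Polynomial ℕ) ^ pmpM123 τ else 0 := Finset.sum_ite_eq' _ _ _
    _ = if ((τ.symm 0 : Fin (M+1)) : ℕ) < k-1 then (Polynomial.X:Polynomial ℕ) ^ pmpM123 τ else 0 := by
        refine if_congr ?_ rfl rfl
        rw [Finset.mem_Icc]
        omega

open Classical in
lemma sumA {m k : ℕ} (hk1 : 1 ≤ k) (hc : k - 1 < m+2) :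
    (∑ σ : Perm (Fin (m+2)),
        if σ ⟨k-1, hc⟩ = 0 ∧ σ.symm 1 < (⟨k-1, hc⟩ : Fin (m+2))
        then (Polynomial.X : Polynomial ℕ) ^ pmpM123 σ else 0)
      = ∑ τ : Perm (Fin (m+1)),
          if ((τ.symm 0 : Fin (m+1)) : ℕ) < k-1 then Polynomial.X ^ pmpM123 τ else 0 := by
  classical
  rw [← Finset.sum_filter, ← Finset.sum_filter]
  refine Finset.sum_nbij' (fun σ => del ⟨k-1, hc⟩ 0 σ) (fun τ => ins ⟨k-1, hc⟩ 0 τ)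
    ?_ ?_ ?_ ?_ ?_
  · intro σ hσ
    rw [Finset.mem_filter] at hσ
    obtain ⟨-, hc0, hq⟩ := hσ
    rw [Finset.mem_filter]
    refine ⟨Finset.mem_univ _, ?_⟩
    have hlt : ((σ.symm 1 : Fin (m+2)) : ℕ) < m+1 :=
      lt_of_lt_of_le (Fin.lt_def.mp hq) (Nat.lt_succ_iff.mp (⟨k-1, hc⟩ : Fin (m+2)).isLt)
    have hdel : del ⟨k-1, hc⟩ 0 σ ⟨(σ.symm 1 : Fin (m+2)).val, hlt⟩ = 0 :=
      del_A_one hc0 hq _ rfl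
    have hsymm : (del ⟨k-1, hc⟩ 0 σ).symm 0 = ⟨(σ.symm 1 : Fin (m+2)).val, hlt⟩ := by
      rw [← hdel, Equiv.symm_apply_apply]
    rw [hsymm]
    exact Fin.lt_def.mp hq
  · intro τ hτ
    rw [Finset.mem_filter] at hτ
    obtain ⟨-, hτ⟩ := hτ
    rw [Finset.mem_filter]
    refine ⟨Finset.mem_univ _, ins_self _ _ _, ?_⟩
    have hsymm : (ins ⟨k-1, hc⟩ 0 τ).symm 1 = Fin.succAbove ⟨k-1, hc⟩ (τ.symm 0) := by
      rw [Equiv.symm_apply_eq, ins_succAbove, Equiv.apply_symm_apply, Fin.zero_succAbove,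
        Fin.succ_zero_eq_one]
    rw [hsymm, Fin.lt_def, succAbove_val, if_pos hτ]
    exact hτ
  · intro σ hσ
    rw [Finset.mem_filter] at hσ
    exact ins_del hσ.2.1
  · intro τ _
    exact del_ins _ _ _
  · intro σ hσ
    rw [Finset.mem_filter] at hσ
    rw [pmp_eq, pmp_eq, cardA hσ.2.1 hσ.2.2]

open Classical in
lemma sumB {m k : ℕ} (hk1 : 1 ≤ k) (hkm : k - 1 < m+1) (hc : k - 1 < m+2) :
    (∑ σ : Perm (Fin (m+2)),
        if σ ⟨k-1, hc⟩ = 0 ∧ (⟨k-1, hc⟩ : Fin (m+2)) < σ.symm 1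
        then (Polynomial.X : Polynomial ℕ) ^ pmpM123 σ else 0)
      = ((m+1-k) • (Polynomial.X : Polynomial ℕ) + 1) *
          ∑ τ : Perm (Fin (m+1)),
            if τ ⟨k-1, hkm⟩ = 0 then Polynomial.X ^ pmpM123 τ else 0 := by
  classical
  rw [← Finset.sum_filter, ← Finset.sum_filter]
  have step1 : (∑ σ ∈ Finset.univ.filter
        (fun σ : Perm (Fin (m+2)) => σ ⟨k-1, hc⟩ = 0 ∧ (⟨k-1, hc⟩ : Fin (m+2)) < σ.symm 1),
        (Polynomial.X : Polynomial ℕ) ^ pmpM123 σ)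
      = ∑ q ∈ (Finset.univ.filter (fun p : Fin (m+2) => (⟨k-1, hc⟩ : Fin (m+2)) < p)) ×ˢ
            (Finset.univ.filter (fun τ : Perm (Fin (m+1)) => τ ⟨k-1, hkm⟩ = 0)),
          (Polynomial.X : Polynomial ℕ) ^ (pmpM123 q.2 + if (q.1 : ℕ) < m+1 then 1 else 0) := by
    refine Finset.sum_nbij' (fun σ => (σ.symm 1, del (σ.symm 1) 1 σ))
      (fun q => ins q.1 1 q.2) ?_ ?_ ?_ ?_ ?_
    · intro σ hσ
      rw [Finset.mem_filter] at hσ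
      obtain ⟨-, hc0, hcp⟩ := hσ
      have hp : σ (σ.symm 1) = 1 := σ.apply_symm_apply 1
      rw [Finset.mem_product, Finset.mem_filter, Finset.mem_filter]
      exact ⟨⟨Finset.mem_univ _, hcp⟩,
        ⟨Finset.mem_univ _, del_B_zero hp hc0 hcp ⟨k-1, hkm⟩ rfl⟩⟩
    · intro q hq
      rw [Finset.mem_product, Finset.mem_filter, Finset.mem_filter] at hq
      obtain ⟨⟨-, hcp⟩, -, hτc⟩ := hq
      rw [Finset.mem_filter]
      have hsc : q.1.succAbove ⟨k-1, hkm⟩ = ⟨k-1, hc⟩ :=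
        Fin.ext (by rw [succAbove_val]; exact if_pos (Fin.lt_def.mp hcp))
      refine ⟨Finset.mem_univ _, ?_, ?_⟩
      · rw [← hsc, ins_succAbove, hτc, w0]
      · have h1 : (ins q.1 1 q.2).symm 1 = q.1 := by rw [Equiv.symm_apply_eq, ins_self]
        rw [h1]
        exact hcp
    · intro σ hσ
      rw [Finset.mem_filter] at hσ
      exact ins_del (σ.apply_symm_apply 1)
    · intro q hq
      have h1 : (ins q.1 1 q.2).symm 1 = q.1 := by rw [Equiv.symm_apply_eq, ins_self]
      refine Prod.ext h1 ?_
      show del ((ins q.1 1 q.2).symm 1) 1 (ins q.1 1 q.2) = q.2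
      rw [h1, del_ins]
    · intro σ hσ
      rw [Finset.mem_filter] at hσ
      obtain ⟨-, hc0, hcp⟩ := hσ
      have hp : σ (σ.symm 1) = 1 := σ.apply_symm_apply 1
      rw [pmp_eq, pmp_eq, cardB hp hc0 hcp]
  rw [step1, Finset.sum_product]
  have step2 : ∀ p : Fin (m+2),
      (∑ τ ∈ Finset.univ.filter (fun τ : Perm (Fin (m+1)) => τ ⟨k-1, hkm⟩ = 0),
        (Polynomial.X : Polynomial ℕ) ^ (pmpM123 τ + if (p : ℕ) < m+1 then 1 else 0))
      = (if (p : ℕ) < m+1 then (Polynomial.X : Polynomial ℕ) else 1) *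
          ∑ τ ∈ Finset.univ.filter (fun τ : Perm (Fin (m+1)) => τ ⟨k-1, hkm⟩ = 0),
            (Polynomial.X : Polynomial ℕ) ^ pmpM123 τ := by
    intro p
    rw [Finset.mul_sum]
    refine Finset.sum_congr rfl fun τ _ => ?_
    rw [pow_add, mul_comm]
    congr 1
    split <;> simp
  calc (∑ p ∈ Finset.univ.filter (fun p : Fin (m+2) => (⟨k-1, hc⟩ : Fin (m+2)) < p),
          ∑ τ ∈ Finset.univ.filter (fun τ : Perm (Fin (m+1)) => τ ⟨k-1, hkm⟩ = 0),
            (Polynomial.X : Polynomial ℕ) ^ (pmpM123 τ + if (p : ℕ) < m+1 then 1 else 0))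
      = (∑ p ∈ Finset.univ.filter (fun p : Fin (m+2) => (⟨k-1, hc⟩ : Fin (m+2)) < p),
          (if (p : ℕ) < m+1 then (Polynomial.X : Polynomial ℕ) else 1)) *
          ∑ τ ∈ Finset.univ.filter (fun τ : Perm (Fin (m+1)) => τ ⟨k-1, hkm⟩ = 0),
            (Polynomial.X : Polynomial ℕ) ^ pmpM123 τ := by
        rw [Finset.sum_mul]
        exact Finset.sum_congr rfl fun p _ => step2 p
    _ = ((m+1-k) • (Polynomial.X : Polynomial ℕ) + 1) *
          ∑ τ ∈ Finset.univ.filter (fun τ : Perm (Fin (m+1)) => τ ⟨k-1, hkm⟩ = 0),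
            (Polynomial.X : Polynomial ℕ) ^ pmpM123 τ := by
        congr 1
        rw [Finset.sum_filter]
        have hrw : ∀ p : Fin (m+2),
            (if (⟨k-1, hc⟩ : Fin (m+2)) < p
              then (if (p : ℕ) < m+1 then (Polynomial.X : Polynomial ℕ) else 1) else 0)
            = (fun i : ℕ => if k-1 < i then (if i < m+1 then (Polynomial.X : Polynomial ℕ) else 1)
                else 0) p.val := fun p => if_congr (Fin.lt_def) rfl rfl
        rw [Finset.sum_congr rfl fun p _ => hrw p,
          Fin.sum_univ_eq_sum_range
            (fun i : ℕ => if k-1 < i then (if i < m+1 then (Polynomial.X : Polynomial ℕ) else 1)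
              else 0) (m+2),
          Finset.sum_range_succ]
        have hlast : (if k-1 < m+1 then (if m+1 < m+1 then (Polynomial.X : Polynomial ℕ) else 1)
            else 0) = 1 := by
          rw [if_pos (by omega), if_neg (lt_irrefl _)]
        rw [hlast]
        congr 1
        have hin : ∀ i ∈ Finset.range (m+1),
            (if k-1 < i then (if i < m+1 then (Polynomial.X : Polynomial ℕ) else 1) else 0)
            = if k-1 < i then (Polynomial.X : Polynomial ℕ) else 0 := by
          intro i hi
          rw [Finset.mem_range] at hi
          rcases Nat.lt_or_ge (k-1) i with h | h
          · rw [if_pos h, if_pos h, if_pos hi]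
          · rw [if_neg (by omega), if_neg (by omega)]
        rw [Finset.sum_congr rfl hin, ← Finset.sum_filter]
        have hIco : (Finset.range (m+1)).filter (fun i => k-1 < i) = Finset.Ico k (m+1) := by
          ext i
          simp only [Finset.mem_filter, Finset.mem_range, Finset.mem_Ico]
          omega
        rw [hIco, Finset.sum_const, Nat.card_Ico]

open Classical in
lemma split_if {m k : ℕ} (hc : k - 1 < m+2) (σ : Perm (Fin (m+2))) :
    (if σ ⟨k-1, hc⟩ = 0 then (Polynomial.X : Polynomial ℕ) ^ pmpM123 σ else 0)
      = (if σ ⟨k-1, hc⟩ = 0 ∧ σ.symm 1 < (⟨k-1, hc⟩ : Fin (m+2))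
          then (Polynomial.X : Polynomial ℕ) ^ pmpM123 σ else 0)
        + (if σ ⟨k-1, hc⟩ = 0 ∧ (⟨k-1, hc⟩ : Fin (m+2)) < σ.symm 1
          then (Polynomial.X : Polynomial ℕ) ^ pmpM123 σ else 0) := by
  by_cases h0 : σ ⟨k-1, hc⟩ = 0
  · have hne : σ.symm 1 ≠ ⟨k-1, hc⟩ := by
      intro he
      have h01 : σ ⟨k-1, hc⟩ = 1 := by rw [← he, Equiv.apply_symm_apply]
      rw [h0] at h01
      have := congrArg Fin.val h01
      simp [Fin.val_one] at this
    rcases lt_or_gt_of_ne hne with h | h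
    · rw [if_pos h0, if_pos ⟨h0, h⟩, if_neg (fun hB => lt_asymm h hB.2), add_zero]
    · rw [if_pos h0, if_neg (fun hA => lt_asymm h hA.2), if_pos ⟨h0, h⟩, zero_add]
  · rw [if_neg h0, if_neg (fun h => h0 h.1), if_neg (fun h => h0 h.1), add_zero]

end Stmt11Aux

open Stmt11Aux in
theorem stmt11 (n k : ℕ) (hn : 2 ≤ n) (h1 : 1 ≤ k) (h2 : k ≤ n) :
    (∀ m N : ℕ, m < N → Q m N = 0) ∧
    Q n k = (∑ ℓ ∈ Finset.Icc 1 (k - 1), Q (n - 1) ℓ) +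
      ((n - k - 1) • Polynomial.X + 1) * Q (n - 1) k := by
  classical
  refine ⟨fun M N h => Q_zero M N h, ?_⟩
  obtain ⟨m, rfl⟩ : ∃ m, n = m + 2 := ⟨n - 2, by omega⟩
  have hc : k - 1 < m + 2 := by omega
  have hsub : m + 2 - 1 = m + 1 := rfl
  rw [hsub]
  rcases eq_or_lt_of_le h2 with rfl | hlt
  · -- k = n = m+2
    have hQ0 : Q (m+1) (m+2) = 0 := Q_zero _ _ (by omega)
    rw [hQ0, mul_zero, add_zero]
    have hQe := Q_eq (N := m+1) h1 hc
    rw [hQe, sum_Icc_Q (M := m) (k := m+2)]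
    have hpt : ∀ σ : Equiv.Perm (Fin (m+2)),
        (if σ ⟨m+2-1, hc⟩ = 0 then (Polynomial.X : Polynomial ℕ) ^ pmpM123 σ else 0)
        = (if σ ⟨m+2-1, hc⟩ = 0 ∧ σ.symm 1 < (⟨m+2-1, hc⟩ : Fin (m+2))
            then (Polynomial.X : Polynomial ℕ) ^ pmpM123 σ else 0) := by
      intro σ
      refine if_congr ⟨fun h0 => ⟨h0, ?_⟩, fun h => h.1⟩ rfl rfl
      have hne : σ.symm 1 ≠ ⟨m+2-1, hc⟩ := by
        intro he
        have h01 : σ ⟨m+2-1, hc⟩ = 1 := by rw [← he, Equiv.apply_symm_apply]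
        rw [h0] at h01
        have := congrArg Fin.val h01
        simp [Fin.val_one] at this
      rw [Fin.lt_def]
      have hv := (σ.symm 1).isLt
      have hvne : ((σ.symm 1 : Fin (m+2)) : ℕ) ≠ m + 2 - 1 := fun hv' => hne (Fin.ext hv')
      simp only []
      omega
    rw [Finset.sum_congr rfl fun σ _ => hpt σ, sumA (m := m) (k := m+2) h1 hc]
  · -- k < m+2
    have hkm : k - 1 < m + 1 := by omega
    have hQe := Q_eq (N := m+1) h1 hc
    rw [hQe, Finset.sum_congr rfl fun σ _ => split_if hc σ, Finset.sum_add_distrib,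
      sumA h1 hc, sumB h1 hkm hc, ← sum_Icc_Q (M := m) (k := k), ← Q_eq (N := m) h1 hkm]
    have hd : m + 2 - k - 1 = m + 1 - k := by omega
    rw [hd]
end

section
/- Let λ = (λ_1 ≥ λ_2 ≥ ... ≥ λ_k) be a Ferrers board with k - i + 1 ≤ λ_i ≤ k for all i, and let S_λ be the set of fillings of λ placing exactly one × in each row and each column. For a filling π, let pmp_{1\underline{2}}(π) be the number of columns c whose × has some × strictly below and strictly to its left within cells of λ. Then Σ_{π ∈ S_λ} x^{pmp_{1\underline{2}}(π)} = Π_{i=1}^{k} (1 + (λ_i - (k - i + 1))x). -/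
open Finset

/-- For a filling (encoded by `π`: the × of row `r` is in column `π r`),
the number of columns `c` whose × has another × strictly below and to the left,
i.e. the pmp of the pattern `1\underline{2}` on the filling. -/
noncomputable def pmpOneTwo {k : ℕ} (π : Equiv.Perm (Fin k)) : ℕ :=
  Nat.card {c : Fin k // ∃ r : Fin k, r < π.symm c ∧ π r < c}


namespace Stmt13Aux

variable {k : ℕ}

/-- Lehmer-type code of a permutation. -/
def tcode (π : Equiv.Perm (Fin k)) (i : Fin k) : ℕ :=
  #(univ.filter fun r => r < i ∧ π r < π i)

lemma card_filter_lt (v : Fin k) : #(univ.filter fun r : Fin k => r < v) = (v : ℕ) := by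
  rw [show (univ.filter fun r : Fin k => r < v) = Iio v by ext r; simp, Fin.card_Iio]

lemma card_filter_perm_lt (π : Equiv.Perm (Fin k)) (v : Fin k) :
    #(univ.filter fun r : Fin k => π r < v) = (v : ℕ) := by
  rw [show (univ.filter fun r : Fin k => π r < v)
      = (univ.filter fun r : Fin k => r < v).map π.symm.toEmbedding by
    ext r
    simp [Equiv.symm_apply_eq]]
  rw [Finset.card_map, card_filter_lt]

lemma tcode_le (π : Equiv.Perm (Fin k)) (i : Fin k) : tcode π i ≤ (i : ℕ) := by
  rw [tcode, ← card_filter_lt i]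
  apply Finset.card_le_card
  intro r hr
  simp only [mem_filter] at *
  exact ⟨hr.1, hr.2.1⟩

lemma pi_eq_tcode_add (π : Equiv.Perm (Fin k)) (i : Fin k) :
    (π i : ℕ) = tcode π i + #(univ.filter fun r => i < r ∧ π r < π i) := by
  rw [← card_filter_perm_lt π (π i), tcode]
  rw [show (univ.filter fun r : Fin k => π r < π i)
      = (univ.filter fun r => r < i ∧ π r < π i) ∪ (univ.filter fun r => i < r ∧ π r < π i) by
    ext r
    simp only [mem_filter, mem_union, mem_univ, true_and]
    constructor
    · intro h
      rcases lt_trichotomy r i with h' | h' | h'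
      · exact Or.inl ⟨h', h⟩
      · exact absurd h (by rw [h']; exact lt_irrefl _)
      · exact Or.inr ⟨h', h⟩
    · rintro (⟨_, h⟩ | ⟨_, h⟩) <;> exact h]
  rw [Finset.card_union_of_disjoint]
  rw [Finset.disjoint_filter]
  rintro r _ ⟨h1, _⟩ ⟨h2, _⟩
  exact absurd h2 (asymm h1)

lemma constraint_of_tcode (lam : Fin k → ℕ) (π : Equiv.Perm (Fin k))
    (h : ∀ i, tcode π i + (k - 1 - (i : ℕ)) < lam i) : ∀ i, (π i : ℕ) < lam i := by
  intro i
  have h2 : #(univ.filter fun r => i < r ∧ π r < π i) ≤ k - 1 - (i : ℕ) := by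
    rw [show k - 1 - (i : ℕ) = #(Ioi i) from (Fin.card_Ioi i).symm]
    apply Finset.card_le_card
    intro r hr
    simp only [mem_filter, mem_Ioi] at *
    exact hr.2.1
  calc (π i : ℕ) = tcode π i + _ := pi_eq_tcode_add π i
    _ ≤ tcode π i + (k - 1 - (i : ℕ)) := by omega
    _ < lam i := h i

lemma tcode_of_constraint (lam : Fin k → ℕ) (hmono : Antitone lam)
    (π : Equiv.Perm (Fin k)) (h : ∀ i, (π i : ℕ) < lam i) :
    ∀ i, tcode π i + (k - 1 - (i : ℕ)) < lam i := by
  intro i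
  -- A₂ : rows r ≥ i with π i ≤ π r; its values lie in [π i, lam i)
  have hA2 : #(univ.filter fun r => i ≤ r ∧ π i ≤ π r) ≤ lam i - (π i : ℕ) := by
    rw [show lam i - (π i : ℕ) = #(Finset.Ico (π i : ℕ) (lam i)) by rw [Nat.card_Ico]]
    apply Finset.card_le_card_of_injOn (fun r => (π r : ℕ))
    · intro r hr
      simp only [mem_coe, mem_filter, mem_univ, true_and] at hr
      simp only [mem_coe, Finset.mem_Ico]
      exact ⟨hr.2, lt_of_lt_of_le (h r) (hmono hr.1)⟩
    · intro a _ b _ hab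
      exact π.injective (Fin.val_injective hab)
  have hsplit : #(univ.filter fun r : Fin k => i ≤ r)
      = #(univ.filter fun r => i ≤ r ∧ π r < π i) + #(univ.filter fun r => i ≤ r ∧ π i ≤ π r) := by
    rw [← Finset.card_union_of_disjoint]
    · congr 1
      ext r
      simp only [mem_filter, mem_union, mem_univ, true_and]
      rcases lt_or_ge (π r) (π i) with h' | h' <;> tauto
    · rw [Finset.disjoint_filter]
      rintro r _ ⟨_, h1⟩ ⟨_, h2⟩
      exact absurd h1 (not_lt.mpr h2)
  have hcardge : k - (i : ℕ) = #(univ.filter fun r : Fin k => i ≤ r) := by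
    rw [show (univ.filter fun r : Fin k => i ≤ r) = Ici i by ext r; simp, Fin.card_Ici]
  have hval : (π i : ℕ) = tcode π i + #(univ.filter fun r => i ≤ r ∧ π r < π i) := by
    rw [pi_eq_tcode_add π i]
    congr 1
    congr 1
    ext r
    simp only [mem_filter, mem_univ, true_and, and_congr_left_iff]
    intro hr
    constructor
    · exact le_of_lt
    · intro h'
      rcases eq_or_lt_of_le h' with h'' | h''
      · exact absurd hr (by rw [← h'']; exact lt_irrefl _)
      · exact h''
  have hik : (i : ℕ) < k := i.isLt
  have hpil : (π i : ℕ) < lam i := h i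
  omega

lemma tcode_eq_val (π : Equiv.Perm (Fin k)) (i : Fin k) :
    tcode π i = #(univ.filter fun v => v < π i ∧ π.symm v < i) := by
  rw [tcode]
  apply Finset.card_nbij' (i := fun r => π r) (j := fun v => π.symm v)
  · intro r hr
    simp only [mem_coe, mem_filter, mem_univ, true_and] at *
    exact ⟨hr.2, by simpa using hr.1⟩
  · intro v hv
    simp only [mem_coe, mem_filter, mem_univ, true_and] at *
    exact ⟨hv.2, by simpa using hv.1⟩
  · intro r _; simp
  · intro v _; simp

lemma tcode_lt_aux (π π' : Equiv.Perm (Fin k)) (i : Fin k)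
    (hgt : ∀ r, i < r → π r = π' r) (hlt : π i < π' i) : tcode π i < tcode π' i := by
  have key : ∀ v : Fin k, v < π' i → π.symm v < i → π'.symm v < i := by
    intro v hv1 hv2
    by_contra hge
    push_neg at hge
    set u := π'.symm v with hu
    have hvu : π' u = v := π'.apply_symm_apply v
    rcases eq_or_lt_of_le hge with he | hgt'
    · have h2 : π' i = v := by rw [he, hvu]
      exact absurd hv1 (by rw [← h2]; exact lt_irrefl _)
    · have hpu : π u = v := by rw [hgt u hgt', hvu]
      have h3 : π.symm v = u := by rw [← hpu, Equiv.symm_apply_apply]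
      exact absurd (h3 ▸ hv2) (not_lt.mpr hgt'.le)
  have hpi : π'.symm (π i) < i := by
    by_contra hge
    push_neg at hge
    set u := π'.symm (π i) with hu
    have hvu : π' u = π i := π'.apply_symm_apply (π i)
    rcases eq_or_lt_of_le hge with he | hgt'
    · have h2 : π' i = π i := by conv_lhs => rw [he, hvu]
      exact absurd hlt (by rw [h2]; exact lt_irrefl _)
    · have hpu : π u = π i := by rw [hgt u hgt', hvu]
      exact absurd hgt' (by rw [π.injective hpu]; exact lt_irrefl _)
  rw [tcode_eq_val, tcode_eq_val]
  apply Finset.card_lt_card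
  rw [Finset.ssubset_iff_of_subset]
  · exact ⟨π i, by simp only [mem_filter, mem_univ, true_and]; exact ⟨⟨hlt, hpi⟩, by simp⟩⟩
  · intro v hv
    simp only [mem_filter, mem_univ, true_and] at *
    exact ⟨lt_trans hv.1 hlt, key v (lt_trans hv.1 hlt) hv.2⟩

lemma tcode_injective : Function.Injective (tcode (k := k)) := by
  intro π π' h
  by_contra hne
  have hs : (univ.filter fun i : Fin k => π i ≠ π' i).Nonempty := by
    by_contra hemp
    apply hne
    ext r
    have := Finset.not_nonempty_iff_eq_empty.mp hemp
    have hr : r ∉ univ.filter fun i : Fin k => π i ≠ π' i := by rw [this]; simp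
    simp only [mem_filter, mem_univ, true_and, not_not] at hr
    exact congrArg Fin.val hr
  set s := univ.filter fun i : Fin k => π i ≠ π' i with hsdef
  obtain ⟨i, hi, hmax⟩ := s.exists_max_image id hs
  have hgt : ∀ r, i < r → π r = π' r := by
    intro r hr
    by_contra hne'
    have : r ∈ s := by simp [hsdef, hne']
    exact absurd hr (not_lt.mpr (hmax r this))
  have hne'' : π i ≠ π' i := by simpa [hsdef] using hi
  rcases lt_or_gt_of_ne hne'' with hlt | hlt
  · have := tcode_lt_aux π π' i hgt hlt
    rw [h] at this
    exact lt_irrefl _ this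
  · have := tcode_lt_aux π' π i (fun r hr => (hgt r hr).symm) hlt
    rw [h] at this
    exact lt_irrefl _ this

/-- The code as a map into the product of `Fin (i+1)`. -/
def T (π : Equiv.Perm (Fin k)) : ∀ i : Fin k, Fin ((i : ℕ) + 1) :=
  fun i => ⟨tcode π i, Nat.lt_succ_of_le (tcode_le π i)⟩

lemma T_bijective : Function.Bijective (T (k := k)) := by
  rw [Fintype.bijective_iff_injective_and_card]
  constructor
  · intro π π' h
    apply tcode_injective
    funext i
    exact congrArg Fin.val (congrFun h i)
  · rw [Fintype.card_perm, Fintype.card_pi, Fintype.card_fin]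
    simp only [Fintype.card_fin]
    rw [Fin.prod_univ_eq_prod_range (fun x => x + 1) k, prod_range_add_one_eq_factorial]

lemma pmp_eq (π : Equiv.Perm (Fin k)) :
    pmpOneTwo π = #(univ.filter fun i => 1 ≤ tcode π i) := by
  classical
  rw [pmpOneTwo, Nat.card_eq_fintype_card]
  rw [Fintype.card_subtype]
  apply Finset.card_nbij' (i := fun c => π.symm c) (j := fun s => π s)
  · intro c hc
    simp only [mem_coe, mem_filter, mem_univ, true_and] at *
    obtain ⟨r, hr1, hr2⟩ := hc
    rw [Nat.one_le_iff_ne_zero, ← Nat.pos_iff_ne_zero, tcode, Finset.card_pos]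
    exact ⟨r, by simp only [mem_filter, mem_univ, true_and]
                 exact ⟨hr1, by rwa [Equiv.apply_symm_apply]⟩⟩
  · intro s hs
    simp only [mem_coe, mem_filter, mem_univ, true_and] at *
    rw [Nat.one_le_iff_ne_zero, ← Nat.pos_iff_ne_zero, tcode, Finset.card_pos] at hs
    obtain ⟨r, hr⟩ := hs
    simp only [mem_filter, mem_univ, true_and] at hr
    exact ⟨r, by simpa using hr.1, by simpa using hr.2⟩
  · intro c _; simp
  · intro s _; simp

lemma card_filter_val_lt (n m : ℕ) (hm : m ≤ n) :
    #(univ.filter fun v : Fin n => (v : ℕ) < m) = m := by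
  rcases Nat.eq_zero_or_pos n with hn | hn
  · subst hn
    interval_cases m
    simp
  · have : #(univ.filter fun v : Fin n => (v : ℕ) < m) = #(Finset.range m) := by
      refine Finset.card_nbij' (fun v : Fin n => (v : ℕ))
        (fun a => (⟨a % n, Nat.mod_lt _ hn⟩ : Fin n)) ?_ ?_ ?_ ?_
      · intro v hv
        simp only [mem_coe, mem_filter, mem_univ, true_and, Finset.mem_range] at *
        exact hv
      · intro a ha
        simp only [mem_coe, Finset.mem_range, mem_filter, mem_univ, true_and] at *
        simpa [Nat.mod_eq_of_lt (lt_of_lt_of_le ha hm)] using ha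
      · intro v hv
        simp [Nat.mod_eq_of_lt v.isLt]
      · intro a ha
        simp only [mem_coe, Finset.mem_range] at ha
        simp [Nat.mod_eq_of_lt (lt_of_lt_of_le ha hm)]
    rw [this, Finset.card_range]

lemma coe_T (π : Equiv.Perm (Fin k)) (i : Fin k) : ((T π i : ℕ)) = tcode π i := rfl

end Stmt13Aux

open Stmt13Aux in
open Classical in
theorem stmt13 (k : ℕ) (lam : Fin k → ℕ) (hmono : Antitone lam)
    (hlb : ∀ i : Fin k, k - (i : ℕ) ≤ lam i) (hub : ∀ i : Fin k, lam i ≤ k) :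
    ∑ π ∈ Finset.univ.filter (fun π : Equiv.Perm (Fin k) => ∀ i, (π i : ℕ) < lam i),
        (Polynomial.X : Polynomial ℕ) ^ pmpOneTwo π =
      ∏ i : Fin k, (1 + (lam i - (k - (i : ℕ))) • (Polynomial.X : Polynomial ℕ)) := by
  classical
  have key : ∑ π ∈ Finset.univ.filter (fun π : Equiv.Perm (Fin k) => ∀ i, (π i : ℕ) < lam i),
      (Polynomial.X : Polynomial ℕ) ^ pmpOneTwo π
      = ∑ t ∈ Fintype.piFinset (fun i : Fin k =>
          univ.filter fun v : Fin ((i : ℕ) + 1) => (v : ℕ) + (k - 1 - (i : ℕ)) < lam i),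
          ∏ i : Fin k, (if 1 ≤ ((t i : ℕ)) then (Polynomial.X : Polynomial ℕ) else 1) := by
    apply Finset.sum_bij (fun π _ => T π)
    · intro π hπ
      rw [Fintype.mem_piFinset]
      intro i
      simp only [mem_filter, mem_univ, true_and] at *
      exact tcode_of_constraint lam hmono π hπ i
    · intro π hπ π' hπ' h
      exact T_bijective.injective h
    · intro t ht
      obtain ⟨π, rfl⟩ := T_bijective.surjective t
      refine ⟨π, ?_, rfl⟩
      simp only [mem_filter, mem_univ, true_and]
      apply constraint_of_tcode lam π
      intro i
      rw [Fintype.mem_piFinset] at ht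
      have := ht i
      simp only [mem_filter, mem_univ, true_and] at this
      exact this
    · intro π hπ
      simp only [coe_T]
      show Polynomial.X ^ pmpOneTwo π = ∏ i, if 1 ≤ tcode π i then (Polynomial.X : Polynomial ℕ) else 1
      rw [← Finset.prod_filter (fun i => 1 ≤ tcode π i)
        (fun _ => (Polynomial.X : Polynomial ℕ)), Finset.prod_const, pmp_eq]
  have hfac : ∀ i : Fin k,
      (∑ v ∈ univ.filter fun v : Fin ((i : ℕ) + 1) => (v : ℕ) + (k - 1 - (i : ℕ)) < lam i,
        (if 1 ≤ (v : ℕ) then (Polynomial.X : Polynomial ℕ) else 1))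
      = 1 + (lam i - (k - (i : ℕ))) • (Polynomial.X : Polynomial ℕ) := by
    intro i
    have hik : (i : ℕ) < k := i.isLt
    have h1 := hlb i
    have h2 := hub i
    have hQ : (univ.filter fun v : Fin ((i : ℕ) + 1) => (v : ℕ) + (k - 1 - (i : ℕ)) < lam i)
        = univ.filter fun v : Fin ((i : ℕ) + 1) => (v : ℕ) < lam i - (k - 1 - (i : ℕ)) := by
      ext v
      simp only [mem_filter, mem_univ, true_and]
      omega
    rw [hQ]
    have hm' : lam i - (k - 1 - (i : ℕ)) ≤ (i : ℕ) + 1 := by omega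
    have h0mem : (0 : Fin ((i : ℕ) + 1)) ∈
        univ.filter fun v : Fin ((i : ℕ) + 1) => (v : ℕ) < lam i - (k - 1 - (i : ℕ)) := by
      simp only [mem_filter, mem_univ, true_and, Fin.val_zero]
      omega
    rw [← Finset.add_sum_erase _ _ h0mem]
    have hX : ∀ v ∈ (univ.filter fun v : Fin ((i : ℕ) + 1) =>
        (v : ℕ) < lam i - (k - 1 - (i : ℕ))).erase 0,
        (if 1 ≤ (v : ℕ) then (Polynomial.X : Polynomial ℕ) else 1) = Polynomial.X := by
      intro v hv
      rw [Finset.mem_erase] at hv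
      have hv0 : (v : ℕ) ≠ 0 := fun h => hv.1 (Fin.ext (by simpa using h))
      rw [if_pos (by omega)]
    rw [Finset.sum_congr rfl hX, Finset.sum_const, Finset.card_erase_of_mem h0mem,
        card_filter_val_lt _ _ hm']
    rw [show ((0 : Fin ((i : ℕ) + 1)) : ℕ) = 0 from rfl, if_neg (by omega)]
    rw [show lam i - (k - 1 - (i : ℕ)) - 1 = lam i - (k - (i : ℕ)) by omega]
  exact key.trans ((Finset.prod_univ_sum _ _).symm.trans (Finset.prod_congr rfl fun i _ => hfac i))
end
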